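/- For all integers n > m ≥ 0 with F_n - F_m = 2^a, one has |1 - 2^a · α^{-n} · √5| < 4/α^{n-m}, where α = (1+√5)/2. -/

import Mathlib

open Real goldenRatio

theorem linear_form_bound (m n a : ℕ) (h : m < n)
    (heq : Nat.fib n - Nat.fib m = 2 ^ a) :
    |1 - (2 : ℝ) ^ a * ((1 + Real.sqrt 5) / 2) ^ (-(n : ℤ)) * Real.sqrt 5| <
      4 / ((1 + Real.sqrt 5) / 2) ^ (n - m) := by
  have hfible : Nat.fib m ≤ Nat.fib n := Nat.fib_mono h.le
  have hfibn : Nat.fib n = Nat.fib m + 2 ^ a := by omega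
  have hs5 : (0:ℝ) < Real.sqrt 5 := Real.sqrt_pos.mpr (by norm_num)
  have hs2 : (2:ℝ) < Real.sqrt 5 := by
    nlinarith [Real.sq_sqrt (by norm_num : (5:ℝ) ≥ 0), Real.sqrt_nonneg 5]
  have hgold : ((1 + Real.sqrt 5) / 2 : ℝ) = φ := rfl
  have hφ1 : (1:ℝ) < φ := by rw [← hgold]; linarith
  have hφpos : (0:ℝ) < φ := goldenRatio_pos
  have hs3 : Real.sqrt 5 < 3 := by
    nlinarith [Real.sq_sqrt (by norm_num : (5:ℝ) ≥ 0), Real.sqrt_nonneg 5]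
  have hψabs : |ψ| < 1 := by
    rw [abs_lt]; unfold goldenConj; constructor <;> linarith
  have hψle : |ψ| ≤ 1 := hψabs.le
  -- Binet
  have hbinet : ∀ k : ℕ, (Nat.fib k : ℝ) * Real.sqrt 5 = φ ^ k - ψ ^ k := by
    intro k
    rw [Real.coe_fib_eq, div_mul_cancel₀ _ hs5.ne']
  have h2a : (2:ℝ) ^ a * Real.sqrt 5 = φ ^ n - ψ ^ n - φ ^ m + ψ ^ m := by
    have h1 := hbinet n
    have h2 := hbinet m
    rw [hfibn] at h1
    push_cast at h1
    nlinarith [h1, h2]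
  rw [hgold, zpow_neg, zpow_natCast]
  have hφn : (0:ℝ) < φ ^ n := pow_pos hφpos n
  have key : 1 - (2:ℝ) ^ a * (φ ^ n)⁻¹ * Real.sqrt 5
      = (ψ ^ n + φ ^ m - ψ ^ m) / φ ^ n := by
    rw [eq_div_iff hφn.ne', sub_mul, one_mul, mul_assoc, mul_comm (Real.sqrt 5),
      ← mul_assoc, mul_assoc ((2:ℝ)^a), inv_mul_cancel₀ hφn.ne', mul_one, h2a]
    ring
  rw [key, abs_div, abs_of_pos hφn]
  have hφm : (0:ℝ) < φ ^ m := pow_pos hφpos m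
  have hφm1 : (1:ℝ) ≤ φ ^ m := one_le_pow₀ hφ1.le
  have hnum : |ψ ^ n + φ ^ m - ψ ^ m| < 4 * φ ^ m := by
    have h1 : |ψ ^ n| ≤ 1 := by
      rw [abs_pow]; exact pow_le_one₀ (abs_nonneg _) hψle
    have h2 : |ψ ^ m| ≤ 1 := by
      rw [abs_pow]; exact pow_le_one₀ (abs_nonneg _) hψle
    calc |ψ ^ n + φ ^ m - ψ ^ m| ≤ |ψ ^ n| + φ ^ m + |ψ ^ m| := by
          have := abs_add_le (ψ ^ n + φ ^ m) (-(ψ ^ m))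
          have h3 : |φ ^ m| = φ ^ m := abs_of_pos hφm
          calc |ψ ^ n + φ ^ m - ψ ^ m| ≤ |ψ ^ n + φ ^ m| + |ψ ^ m| := abs_sub _ _
            _ ≤ |ψ ^ n| + |φ ^ m| + |ψ ^ m| := by linarith [abs_add_le (ψ ^ n) (φ ^ m)]
            _ = |ψ ^ n| + φ ^ m + |ψ ^ m| := by rw [h3]
      _ < 4 * φ ^ m := by linarith
  have hpow : φ ^ (n - m) * φ ^ m = φ ^ n := by
    rw [← pow_add]; congr 1; omega
  rw [div_lt_div_iff₀ hφn (pow_pos hφpos (n - m))]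
  calc |ψ ^ n + φ ^ m - ψ ^ m| * φ ^ (n - m)
      < 4 * φ ^ m * φ ^ (n - m) := by
        apply mul_lt_mul_of_pos_right hnum (pow_pos hφpos (n - m))
    _ = 4 * φ ^ n := by rw [mul_assoc, mul_comm (φ ^ m), hpow]
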